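/- Let ω, μ₀, β, λ > 0. For f ∈ L₁(ℝ₊) the function u(x) = (1/ω)∫₀ˣ exp(−[(λ+μ₀)(x−y)/ω + β(x²−y²)/(2ω)]) f(y) dy satisfies the ODE λu(x) + ωu'(x) + (μ₀+βx)u(x) = f(x) for a.e. x > 0, with u(0) = 0, and ‖u‖_{L₁} ≤ ‖f‖_{L₁}/(λ+μ₀). -/

import Mathlib

open MeasureTheory

open Set Filter Real intervalIntegral
open scoped Topology ENNReal NNReal

lemma ae_hasDerivAt_primitive {g : ℝ → ℝ} (hg : LocallyIntegrable g volume) :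
    ∀ᵐ x : ℝ, HasDerivAt (fun t => ∫ s in (0:ℝ)..t, g s) (g x) x := by
  have hint : ∀ a b : ℝ, IntervalIntegrable g volume a b := fun a b =>
    (hg.integrableOn_isCompact isCompact_uIcc).intervalIntegrable
  filter_upwards [(IsUnifLocDoublingMeasure.vitaliFamily (volume : Measure ℝ)
    1).ae_tendsto_average_norm_sub hg] with x hx
  set F : ℝ → ℝ := fun t => ∫ s in (0:ℝ)..t, g s with hF
  rw [hasDerivAt_iff_tendsto_slope, ← nhdsLT_sup_nhdsGT, tendsto_sup]
  have key : ∀ c d : ℝ, c ≤ d →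
      ‖(∫ s in c..d, g s) - (d - c) * g x‖ ≤ (d - c) * ⨍ s in Icc c d, ‖g s - g x‖ := by
    intro c d hcd
    have h1 : (∫ s in c..d, g s) - (d - c) * g x = ∫ s in c..d, (g s - g x) := by
      rw [intervalIntegral.integral_sub (hint c d) (intervalIntegrable_const)]
      simp [smul_eq_mul]
    rw [h1]
    have h2 : ‖∫ s in c..d, (g s - g x)‖ ≤ ∫ s in Ioc c d, ‖g s - g x‖ := by
      rw [intervalIntegral.integral_of_le hcd]
      exact norm_integral_le_integral_norm _
    refine h2.trans ?_
    rw [setAverage_eq, Real.volume_real_Icc_of_le hcd, smul_eq_mul]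
    rw [← MeasureTheory.integral_Icc_eq_integral_Ioc]
    rcases eq_or_lt_of_le hcd with h | h
    · simp [h]
    · rw [← mul_assoc, mul_inv_cancel₀ (by linarith), one_mul]
  constructor
  · -- from the left
    have L := hx.comp (Real.tendsto_Icc_vitaliFamily_left x)
    rw [tendsto_iff_norm_sub_tendsto_zero]
    refine squeeze_zero' (.of_forall fun _ => norm_nonneg _) ?_ L
    filter_upwards [self_mem_nhdsWithin] with y (hy : y < x)
    have hFd : F x - F y = ∫ s in y..x, g s := by
      simp only [hF]
      rw [← intervalIntegral.integral_add_adjacent_intervals (hint 0 y) (hint y x)]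
      ring
    have h0 : x - y ≠ 0 := by intro h; rw [sub_eq_zero] at h; exact absurd h (ne_of_gt hy)
    have h0' : y - x ≠ 0 := by intro h; rw [sub_eq_zero] at h; exact absurd h (ne_of_lt hy)
    have hs : slope F x y - g x = ((∫ s in y..x, g s) - (x - y) * g x) / (x - y) := by
      rw [slope_def_field, show F y - F x = -(F x - F y) by ring, hFd]
      field_simp
      ring
    rw [hs, Function.comp_apply]
    have hxy : (0:ℝ) < x - y := by linarith
    rw [norm_div, Real.norm_eq_abs (x-y), abs_of_pos hxy, div_le_iff₀ hxy]
    have := key y x (le_of_lt hy)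
    calc ‖(∫ s in y..x, g s) - (x - y) * g x‖
      ≤ (x - y) * ⨍ s in Icc y x, ‖g s - g x‖ := key y x hy.le
      _ = (⨍ s in Icc y x, ‖g s - g x‖) * (x - y) := by ring
  · -- from the right
    have L := hx.comp (Real.tendsto_Icc_vitaliFamily_right x)
    rw [tendsto_iff_norm_sub_tendsto_zero]
    refine squeeze_zero' (.of_forall fun _ => norm_nonneg _) ?_ L
    filter_upwards [self_mem_nhdsWithin] with y (hy : x < y)
    have hFd : F y - F x = ∫ s in x..y, g s := by
      simp only [hF]
      rw [← intervalIntegral.integral_add_adjacent_intervals (hint 0 x) (hint x y)]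
      ring
    have h0 : y - x ≠ 0 := by intro h; rw [sub_eq_zero] at h; exact absurd h (ne_of_gt hy)
    have hs : slope F x y - g x = ((∫ s in x..y, g s) - (y - x) * g x) / (y - x) := by
      rw [slope_def_field, hFd]
      field_simp
    rw [hs, Function.comp_apply]
    have hxy : (0:ℝ) < y - x := by linarith
    rw [norm_div, Real.norm_eq_abs (y-x), abs_of_pos hxy, div_le_iff₀ hxy]
    calc ‖(∫ s in x..y, g s) - (y - x) * g x‖
        ≤ (y - x) * ⨍ s in Icc x y, ‖g s - g x‖ := key x y hy.le
      _ = (⨍ s in Icc x y, ‖g s - g x‖) * (y - x) := by ring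

/-- Explicit resolvent formula for the transport operator: the function
u(x) = (1/ω)∫₀ˣ exp(−[(λ+μ₀)(x−y)/ω + β(x²−y²)/(2ω)]) f(y) dy satisfies
λu + ωu' + (μ₀+βx)u = f a.e. on (0,∞), u(0) = 0, and ‖u‖₁ ≤ ‖f‖₁/(λ+μ₀). -/
theorem resolvent_formula
    (ω μ₀ β lam : ℝ) (hω : 0 < ω) (hμ₀ : 0 < μ₀) (hβ : 0 < β) (hlam : 0 < lam)
    (f : ℝ → ℝ) (hf : IntegrableOn f (Set.Ioi 0))
    (u : ℝ → ℝ)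
    (hu : ∀ x, u x = (1 / ω) * ∫ y in (0:ℝ)..x,
      Real.exp (-((lam + μ₀) * (x - y) / ω + β * (x ^ 2 - y ^ 2) / (2 * ω))) * f y) :
    u 0 = 0 ∧
    (∀ᵐ x ∂(volume.restrict (Set.Ioi (0:ℝ))),
      lam * u x + ω * deriv u x + (μ₀ + β * x) * u x = f x) ∧
    ∫ x in Set.Ioi (0:ℝ), |u x| ≤ (∫ x in Set.Ioi (0:ℝ), |f x|) / (lam + μ₀) := by
  have hω0 : ω ≠ 0 := ne_of_gt hω
  have hlm : (0:ℝ) < lam + μ₀ := by linarith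
  have hlm0 : lam + μ₀ ≠ 0 := ne_of_gt hlm
  set Φ : ℝ → ℝ := fun t => (lam + μ₀) / ω * t + β / (2 * ω) * t ^ 2 with hΦ
  have hΦc : Continuous Φ := by fun_prop
  have hΦd : ∀ t : ℝ, HasDerivAt Φ ((lam + μ₀) / ω + β / ω * t) t := by
    intro t
    have h1 := ((hasDerivAt_id t).const_mul ((lam + μ₀) / ω)).add
      ((hasDerivAt_pow 2 t).const_mul (β / (2 * ω)))
    exact h1.congr_deriv (by ring)
  set g : ℝ → ℝ := (Set.Ioi (0:ℝ)).indicator (fun y => Real.exp (Φ y) * f y) with hg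
  -- local integrability of g
  have hgloc : LocallyIntegrable g volume := by
    rw [locallyIntegrable_iff]
    intro K hK
    rw [IntegrableOn, hg, integrable_indicator_iff measurableSet_Ioi]
    simp only [IntegrableOn, Measure.restrict_restrict measurableSet_Ioi]
    obtain ⟨C, hC⟩ := hK.exists_bound_of_continuousOn
      (Real.continuous_exp.comp hΦc).continuousOn
    have hsub : Set.Ioi (0:ℝ) ∩ K ⊆ Set.Ioi 0 := Set.inter_subset_left
    refine Integrable.mono ((hf.mono_set hsub).const_mul C) ?_ ?_
    · exact ((Real.continuous_exp.comp hΦc).aestronglyMeasurable).mul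
        (hf.aestronglyMeasurable.mono_measure (Measure.restrict_mono hsub le_rfl))
    · refine (ae_restrict_iff' (measurableSet_Ioi.inter hK.measurableSet)).2
        (.of_forall fun y hy => ?_)
      have h1 : Real.exp (Φ y) ≤ C := by
        have h := hC y hy.2
        rwa [Function.comp_apply, Real.norm_eq_abs, abs_of_pos (Real.exp_pos _)] at h
      have h2 : (0:ℝ) ≤ Real.exp (Φ y) := (Real.exp_pos _).le
      rw [Real.norm_eq_abs, Real.norm_eq_abs, abs_mul, abs_mul,
        abs_of_pos (Real.exp_pos _)]
      exact mul_le_mul (h1.trans (le_abs_self C)) le_rfl (abs_nonneg _) (abs_nonneg _)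
  have hint : ∀ c d : ℝ, IntervalIntegrable g volume c d := fun c d =>
    (hgloc.integrableOn_isCompact isCompact_uIcc).intervalIntegrable
  set G : ℝ → ℝ := fun t => ∫ s in (0:ℝ)..t, g s with hG
  set v : ℝ → ℝ := fun t => (1 / ω) * (Real.exp (-Φ t) * G t) with hv
  have hvc : Continuous v := by
    have := intervalIntegral.continuous_primitive hint 0
    fun_prop
  -- u = v on Ioi 0
  have huv : ∀ x ∈ Set.Ioi (0:ℝ), u x = v x := by
    intro x hx
    rw [hu x, hv]
    congr 1
    have h1 : ∀ y : ℝ, Real.exp (-((lam + μ₀) * (x - y) / ω + β * (x ^ 2 - y ^ 2) / (2 * ω)))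
        * f y = Real.exp (-Φ x) * (Real.exp (Φ y) * f y) := by
      intro y
      rw [← mul_assoc, ← Real.exp_add]
      congr 1
      rw [hΦ]
      field_simp
      ring
    simp only [h1]
    rw [intervalIntegral.integral_const_mul]
    have h2 : (∫ y in (0:ℝ)..x, Real.exp (Φ y) * f y) = G x := by
      simp only [hG]
      rw [intervalIntegral.integral_of_le (le_of_lt hx),
        intervalIntegral.integral_of_le (le_of_lt hx)]
      refine setIntegral_congr_fun measurableSet_Ioc (fun y hy => ?_)
      rw [hg, Set.indicator_of_mem (Set.mem_Ioi.mpr hy.1)]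
    rw [h2]
  refine ⟨?_, ?_, ?_⟩
  · rw [hu 0, intervalIntegral.integral_same, mul_zero]
  · -- the ODE
    filter_upwards [ae_restrict_of_ae (ae_hasDerivAt_primitive hgloc),
      ae_restrict_mem measurableSet_Ioi] with x hGd hx
    have hx0 : (0:ℝ) < x := hx
    have hEd : HasDerivAt (fun t => Real.exp (-Φ t))
        (Real.exp (-Φ x) * -((lam + μ₀) / ω + β / ω * x)) x := ((hΦd x).neg).exp
    have hvd : HasDerivAt v ((1 / ω) * ((Real.exp (-Φ x) * -((lam + μ₀) / ω + β / ω * x)) * G x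
        + Real.exp (-Φ x) * g x)) x := ((hEd.mul hGd).const_mul (1 / ω))
    have huveq : u =ᶠ[nhds x] v := by
      filter_upwards [Ioi_mem_nhds hx0] with y hy using huv y hy
    have hud := hvd.congr_of_eventuallyEq huveq
    rw [hud.deriv, huv x hx, hv]
    rw [hg, Set.indicator_of_mem hx]
    have hE : Real.exp (-Φ x) * Real.exp (Φ x) = 1 := by
      rw [← Real.exp_add]; simp
    field_simp
    linear_combination (ω * f x) * hE
  · -- the L¹ bound
    set a : ℝ := (lam + μ₀) / ω with ha
    have ha0 : 0 < a := div_pos hlm hω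
    have humeas : AEStronglyMeasurable u (volume.restrict (Set.Ioi 0)) := by
      refine hvc.aestronglyMeasurable.congr ?_
      filter_upwards [ae_restrict_mem measurableSet_Ioi] with x hx using (huv x hx).symm
    -- integrability of the exponential kernel against |f|
    have hI2 : ∀ x : ℝ, IntegrableOn (fun y => Real.exp (a * (y - x)) * |f y|)
        (Set.Ioc 0 x) := by
      intro x
      have hfx : IntegrableOn f (Set.Ioc 0 x) := hf.mono_set Set.Ioc_subset_Ioi_self
      have habsf : AEStronglyMeasurable (fun y => |f y|)
          (volume.restrict (Set.Ioc 0 x)) :=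
        hfx.aestronglyMeasurable.norm.congr (.of_forall fun y => Real.norm_eq_abs (f y))
      refine Integrable.mono hfx.abs
        (((Real.continuous_exp.comp (by fun_prop)).aestronglyMeasurable).mul habsf) ?_
      refine (ae_restrict_iff' measurableSet_Ioc).2 (.of_forall fun y hy => ?_)
      have he1 : Real.exp (a * (y - x)) ≤ 1 := by
        rw [Real.exp_le_one_iff]
        nlinarith [hy.2]
      rw [Real.norm_eq_abs, Real.norm_eq_abs,
        abs_of_nonneg (mul_nonneg (Real.exp_pos _).le (abs_nonneg _)), abs_abs]
      nlinarith [abs_nonneg (f y), Real.exp_pos (a * (y - x))]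
    -- pointwise bound for |u|
    have hub : ∀ x ∈ Set.Ioi (0:ℝ),
        |u x| ≤ (1 / ω) * ∫ y in Set.Ioc 0 x, Real.exp (a * (y - x)) * |f y| := by
      intro x hx
      have hxle : (0:ℝ) ≤ x := le_of_lt hx
      have hfx : IntegrableOn f (Set.Ioc 0 x) := hf.mono_set Set.Ioc_subset_Ioi_self
      have hbnd : ∀ y ∈ Set.Ioc (0:ℝ) x,
          |Real.exp (-((lam + μ₀) * (x - y) / ω + β * (x ^ 2 - y ^ 2) / (2 * ω))) * f y|
            ≤ Real.exp (a * (y - x)) * |f y| := by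
        intro y hy
        rw [abs_mul, abs_of_pos (Real.exp_pos _)]
        refine mul_le_mul_of_nonneg_right ?_ (abs_nonneg _)
        apply Real.exp_le_exp.2
        have hy2 : y ^ 2 ≤ x ^ 2 := by nlinarith [hy.1, hy.2]
        have hb0 : 0 ≤ β * (x ^ 2 - y ^ 2) / (2 * ω) :=
          div_nonneg (mul_nonneg hβ.le (by linarith)) (by linarith)
        have heq : a * (y - x) = -((lam + μ₀) * (x - y) / ω) := by rw [ha]; field_simp; ring
        rw [heq]
        linarith
      have hI1 : IntegrableOn (fun y =>
          |Real.exp (-((lam + μ₀) * (x - y) / ω + β * (x ^ 2 - y ^ 2) / (2 * ω))) * f y|)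
          (Set.Ioc 0 x) := by
        refine Integrable.mono ((hI2 x))
          (((Real.continuous_exp.comp (by fun_prop)).aestronglyMeasurable.mul
            hfx.aestronglyMeasurable).norm.congr
            (.of_forall fun y => Real.norm_eq_abs _)) ?_
        refine (ae_restrict_iff' measurableSet_Ioc).2 (.of_forall fun y hy => ?_)
        rw [Real.norm_eq_abs, Real.norm_eq_abs, abs_abs,
          abs_of_nonneg (mul_nonneg (Real.exp_pos _).le (abs_nonneg _))]
        exact hbnd y hy
      rw [hu x, abs_mul, abs_of_pos (by positivity : (0:ℝ) < 1 / ω)]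
      refine mul_le_mul_of_nonneg_left ?_ (by positivity)
      rw [intervalIntegral.integral_of_le hxle]
      calc |∫ y in Set.Ioc 0 x,
            Real.exp (-((lam + μ₀) * (x - y) / ω + β * (x ^ 2 - y ^ 2) / (2 * ω))) * f y|
          = ‖∫ y in Set.Ioc 0 x,
            Real.exp (-((lam + μ₀) * (x - y) / ω + β * (x ^ 2 - y ^ 2) / (2 * ω))) * f y‖ :=
            (Real.norm_eq_abs _).symm
        _ ≤ ∫ y in Set.Ioc 0 x,
            ‖Real.exp (-((lam + μ₀) * (x - y) / ω + β * (x ^ 2 - y ^ 2) / (2 * ω))) * f y‖ :=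
            norm_integral_le_integral_norm _
        _ = ∫ y in Set.Ioc 0 x,
            |Real.exp (-((lam + μ₀) * (x - y) / ω + β * (x ^ 2 - y ^ 2) / (2 * ω))) * f y| := by
            simp only [Real.norm_eq_abs]
        _ ≤ ∫ y in Set.Ioc 0 x, Real.exp (a * (y - x)) * |f y| :=
            setIntegral_mono_on hI1 (hI2 x) measurableSet_Ioc hbnd
    -- measurable representative of f
    have hfm := hf.aestronglyMeasurable
    set φ : ℝ → ℝ := hfm.mk f with hφ
    have hφm : StronglyMeasurable φ := hfm.stronglyMeasurable_mk
    have hφe : f =ᵐ[volume.restrict (Set.Ioi 0)] φ := hfm.ae_eq_mk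
    set W : ℝ → ℝ → ℝ≥0∞ :=
      fun x y => ENNReal.ofReal ((1 / ω) * (Real.exp (a * (y - x)) * |φ y|)) with hW
    -- step 1 : pointwise domination by an iterated lintegral
    have step1 : ∫⁻ x in Set.Ioi 0, ENNReal.ofReal |u x|
        ≤ ∫⁻ x in Set.Ioi 0, ∫⁻ y in Set.Ioi 0, (Set.Ioc 0 x).indicator (W x) y := by
      refine lintegral_mono_ae ?_
      filter_upwards [ae_restrict_mem measurableSet_Ioi] with x hx
      calc ENNReal.ofReal |u x|
          ≤ ENNReal.ofReal ((1 / ω) * ∫ y in Set.Ioc 0 x, Real.exp (a * (y - x)) * |f y|) :=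
            ENNReal.ofReal_le_ofReal (hub x hx)
        _ = ENNReal.ofReal (∫ y in Set.Ioc 0 x, (1 / ω) * (Real.exp (a * (y - x)) * |f y|)) := by
            rw [MeasureTheory.integral_const_mul]
        _ = ∫⁻ y in Set.Ioc 0 x,
              ENNReal.ofReal ((1 / ω) * (Real.exp (a * (y - x)) * |f y|)) :=
            ofReal_integral_eq_lintegral_ofReal ((hI2 x).const_mul _)
              (.of_forall fun y => by positivity)
        _ = ∫⁻ y in Set.Ioc 0 x, W x y := by
            refine lintegral_congr_ae ?_
            filter_upwards [ae_restrict_of_ae_restrict_of_subset Set.Ioc_subset_Ioi_self hφe]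
              with y hy
            rw [hW, hy]
        _ = ∫⁻ y in Set.Ioi 0, (Set.Ioc 0 x).indicator (W x) y := by
            rw [lintegral_indicator measurableSet_Ioc,
              Measure.restrict_restrict measurableSet_Ioc,
              Set.inter_eq_left.mpr Set.Ioc_subset_Ioi_self]
    -- step 2 : Tonelli
    have hWm : Measurable (fun p : ℝ × ℝ => (Set.Ioc 0 p.1).indicator (W p.1) p.2) := by
      have heq : (fun p : ℝ × ℝ => (Set.Ioc 0 p.1).indicator (W p.1) p.2)
          = Set.indicator {q : ℝ × ℝ | 0 < q.2 ∧ q.2 ≤ q.1}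
            (fun q => ENNReal.ofReal ((1 / ω) * (Real.exp (a * (q.2 - q.1)) * |φ q.2|))) := by
        funext p
        simp [hW, Set.indicator_apply, Set.mem_Ioc, Set.mem_setOf_eq]
      rw [heq]
      refine Measurable.indicator ?_
        ((measurableSet_lt measurable_const measurable_snd).inter
          (measurableSet_le measurable_snd measurable_fst))
      refine ENNReal.measurable_ofReal.comp (Measurable.const_mul (Measurable.mul ?_ ?_) _)
      · exact (Real.continuous_exp.comp (by fun_prop)).measurable
      · exact (hφm.measurable.comp measurable_snd).abs
    have step2 : ∫⁻ x in Set.Ioi 0, ∫⁻ y in Set.Ioi 0, (Set.Ioc 0 x).indicator (W x) y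
        = ∫⁻ y in Set.Ioi 0, ∫⁻ x in Set.Ioi 0, (Set.Ioc 0 x).indicator (W x) y :=
      lintegral_lintegral_swap hWm.aemeasurable
    -- step 3 : compute the inner integral
    have inner : ∀ y ∈ Set.Ioi (0:ℝ),
        ∫⁻ x in Set.Ioi 0, (Set.Ioc 0 x).indicator (W x) y
          = ENNReal.ofReal ((1 / (lam + μ₀)) * |φ y|) := by
      intro y hy
      have hy0 : (0:ℝ) < y := hy
      have h1 : (fun x => (Set.Ioc 0 x).indicator (W x) y)
          = (Set.Ici y).indicator (fun x => W x y) := by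
        funext x
        simp only [Set.indicator_apply, Set.mem_Ioc, Set.mem_Ici]
        by_cases h : y ≤ x
        · simp [h, hy0]
        · simp [h]
      have hIci : Set.Ici y ∩ Set.Ioi 0 = Set.Ici y :=
        Set.inter_eq_left.mpr (fun z (hz : z ∈ Set.Ici y) => Set.mem_Ioi.mpr
          (lt_of_lt_of_le hy0 hz))
      rw [h1, lintegral_indicator measurableSet_Ici,
        Measure.restrict_restrict measurableSet_Ici, hIci]
      have hexp : ∀ x : ℝ, Real.exp (a * (y - x)) = Real.exp (a * y) * Real.exp (-a * x) := by
        intro x; rw [← Real.exp_add]; ring_nf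
      have hIexp : IntegrableOn (fun x => Real.exp (a * (y - x))) (Set.Ioi y) := by
        have : (fun x => Real.exp (a * (y - x)))
            = fun x => Real.exp (a * y) * Real.exp (-a * x) := funext hexp
        rw [this]
        exact (exp_neg_integrableOn_Ioi y ha0).const_mul _
      have hInt : IntegrableOn (fun x => (1 / ω) * (Real.exp (a * (y - x)) * |φ y|))
          (Set.Ici y) := by
        rw [integrableOn_Ici_iff_integrableOn_Ioi]
        have : (fun x => (1 / ω) * (Real.exp (a * (y - x)) * |φ y|))
            = fun x => ((1 / ω) * |φ y| * Real.exp (a * y)) * Real.exp (-a * x) := by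
          funext x; rw [hexp]; ring
        rw [this]
        exact (exp_neg_integrableOn_Ioi y ha0).const_mul _
      rw [← ofReal_integral_eq_lintegral_ofReal hInt (.of_forall fun x => by positivity)]
      congr 1
      have hval : ∫ x in Set.Ioi y, Real.exp (a * (y - x)) = 1 / a := by
        have hd : ∀ x ∈ Set.Ici y, HasDerivAt (fun x => -(1 / a) * Real.exp (a * (y - x)))
            (Real.exp (a * (y - x))) x := by
          intro x _
          have h1 : HasDerivAt (fun x : ℝ => a * (y - x)) (-a) x := by
            have := ((hasDerivAt_id x).const_sub y).const_mul a
            simpa using this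
          have h2 := (h1.exp).const_mul (-(1 / a))
          exact h2.congr_deriv (by field_simp [ne_of_gt ha0])
        have htend : Tendsto (fun x => -(1 / a) * Real.exp (a * (y - x))) atTop (𝓝 0) := by
          have h1 : Tendsto (fun x : ℝ => a * (y - x)) atTop atBot := by
            have h2 : Tendsto (fun x : ℝ => a * x) atTop atTop :=
              tendsto_id.const_mul_atTop ha0
            have h3 := tendsto_neg_atTop_atBot.comp h2
            have h4 := tendsto_atBot_add_const_left atTop (a * y) h3
            exact h4.congr (fun x => by simp; ring)
          have h3 := Real.tendsto_exp_atBot.comp h1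
          have h4 := h3.const_mul (-(1 / a))
          simpa using h4
        rw [MeasureTheory.integral_Ioi_of_hasDerivAt_of_tendsto' hd hIexp htend]
        simp [ne_of_gt ha0]
      rw [integral_Ici_eq_integral_Ioi, MeasureTheory.integral_const_mul]
      rw [show (fun x => Real.exp (a * (y - x)) * |φ y|)
          = fun x => |φ y| * Real.exp (a * (y - x)) by funext x; ring]
      rw [MeasureTheory.integral_const_mul, hval, ha]
      rw [show (1:ℝ) / ω * (|φ y| * (1 / ((lam + μ₀) / ω))) = 1 / (lam + μ₀) * |φ y| by
        field_simp]
    -- put everything together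
    have hIφ : Integrable (fun y => (1 / (lam + μ₀)) * |φ y|)
        (volume.restrict (Set.Ioi 0)) := by
      refine (hf.abs.const_mul (1 / (lam + μ₀))).congr ?_
      filter_upwards [hφe] with y hy
      rw [hy]
    have key : ∫⁻ x in Set.Ioi 0, ENNReal.ofReal |u x|
        ≤ ENNReal.ofReal ((∫ x in Set.Ioi 0, |f x|) / (lam + μ₀)) := by
      refine step1.trans ?_
      rw [step2]
      have h5 : ∫⁻ y in Set.Ioi 0, ∫⁻ x in Set.Ioi 0, (Set.Ioc 0 x).indicator (W x) y
          = ∫⁻ y in Set.Ioi 0, ENNReal.ofReal ((1 / (lam + μ₀)) * |φ y|) := by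
        refine lintegral_congr_ae ?_
        filter_upwards [ae_restrict_mem measurableSet_Ioi] with y hy using inner y hy
      rw [h5, ← ofReal_integral_eq_lintegral_ofReal hIφ
        (.of_forall fun y => by positivity)]
      refine ENNReal.ofReal_le_ofReal ?_
      rw [MeasureTheory.integral_const_mul]
      have hcong : (fun y => |φ y|) =ᶠ[ae (volume.restrict (Set.Ioi 0))]
          fun y => |f y| := by
        filter_upwards [hφe] with y hy
        rw [hy]
      have hφf : ∫ y in Set.Ioi 0, |φ y| = ∫ y in Set.Ioi 0, |f y| :=
        integral_congr_ae hcong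
      rw [hφf]
      exact le_of_eq (by ring)
    have habsu : AEStronglyMeasurable (fun x => |u x|) (volume.restrict (Set.Ioi 0)) :=
      humeas.norm.congr (.of_forall fun x => Real.norm_eq_abs (u x))
    rw [integral_eq_lintegral_of_nonneg_ae (.of_forall fun x => abs_nonneg _) habsu]
    exact ENNReal.toReal_le_of_le_ofReal
      (div_nonneg (integral_nonneg fun x => abs_nonneg _) hlm.le) key
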